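/- arXiv:2512.01944 — 3 statements merged into one kernel-verified Lean document; each statement's English description precedes it below -/
import Mathlib

section
/- Let V be an n × (k) real matrix (with k ≤ n) and let A ∈ GL(n,ℝ) have singular values σ₁ ≥ … ≥ σ_n. Then (∏_{i=n−k+1}^{n} σ_i)² · det(VᵀV) ≤ det((AV)ᵀ(AV)) ≤ (∏_{i=1}^{k} σ_i)² · det(VᵀV). -/
open Matrix Polynomial Finset

lemma le_apply_of_strictMono {k n : ℕ} {f : Fin k → Fin n} (hf : StrictMono f) :
    ∀ j : Fin k, (j : ℕ) ≤ (f j : ℕ) := by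
  intro j
  induction' hm : (j : ℕ) with m ih generalizing j
  · exact Nat.zero_le _
  · have hmk : m < k := by omega
    have h1 : (⟨m, hmk⟩ : Fin k) < j := by rw [Fin.lt_def]; simpa using by omega
    have h3 := ih ⟨m, hmk⟩ rfl
    have h2 : (f ⟨m, hmk⟩ : ℕ) < (f j : ℕ) := hf h1
    omega

lemma image_orderEmbOfFin {n k : ℕ} (T : Finset (Fin n)) (hT : T.card = k) :
    Finset.univ.image (fun j => T.orderEmbOfFin hT j) = T := by
  apply Finset.eq_of_subset_of_card_le
  · intro x hx
    obtain ⟨j, _, rfl⟩ := Finset.mem_image.mp hx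
    exact T.orderEmbOfFin_mem hT j
  · rw [hT, Finset.card_image_of_injective _ (T.orderEmbOfFin hT).injective,
      Finset.card_univ, Fintype.card_fin]

lemma prod_le_top {n k : ℕ} (hk : k ≤ n) {σ : Fin n → ℝ} (hanti : Antitone σ)
    (hpos : ∀ j, 0 ≤ σ j) (T : Finset (Fin n)) (hT : T.card = k) :
    ∏ i ∈ T, σ i ≤ ∏ i ∈ Finset.univ.filter (fun i : Fin n => (i : ℕ) < k), σ i := by
  have he : ∏ j : Fin k, σ (T.orderEmbOfFin hT j) = ∏ i ∈ T, σ i := by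
    rw [← Finset.prod_image (fun a _ b _ h => (T.orderEmbOfFin hT).injective h),
      image_orderEmbOfFin T hT]
  have himg2 : Finset.univ.image (fun j : Fin k => Fin.castLE hk j)
      = Finset.univ.filter (fun i : Fin n => (i : ℕ) < k) := by
    ext x
    simp only [Finset.mem_image, Finset.mem_univ, true_and, Finset.mem_filter]
    constructor
    · rintro ⟨j, rfl⟩; exact (by simpa using j.isLt)
    · intro hx; exact ⟨⟨(x : ℕ), hx⟩, by ext; simp⟩
  have hf : ∏ i ∈ Finset.univ.filter (fun i : Fin n => (i : ℕ) < k), σ i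
      = ∏ j : Fin k, σ (Fin.castLE hk j) := by
    rw [← himg2, Finset.prod_image (fun a _ b _ h => Fin.castLE_injective hk h)]
  rw [← he, hf]
  apply Finset.prod_le_prod (fun _ _ => hpos _)
  intro j _
  apply hanti
  rw [Fin.le_def]
  simpa using le_apply_of_strictMono (T.orderEmbOfFin hT).strictMono j

lemma bottom_le_prod {n k : ℕ} (hk : k ≤ n) {σ : Fin n → ℝ} (hanti : Antitone σ)
    (hpos : ∀ j, 0 ≤ σ j) (T : Finset (Fin n)) (hT : T.card = k) :
    ∏ i ∈ Finset.univ.filter (fun i : Fin n => n - k ≤ (i : ℕ)), σ i ≤ ∏ i ∈ T, σ i := by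
  set e := fun j => T.orderEmbOfFin hT j with he_def
  have he : ∏ j : Fin k, σ (e j) = ∏ i ∈ T, σ i := by
    rw [← Finset.prod_image (fun a _ b _ h => (T.orderEmbOfFin hT).injective h),
      image_orderEmbOfFin T hT]
  have hbd : ∀ j : Fin k, (e j : ℕ) ≤ n - k + (j : ℕ) := by
    intro j
    have hsm : StrictMono (fun j : Fin k => Fin.rev (e (Fin.rev j))) := by
      intro a b hab
      have h1 : Fin.rev b < Fin.rev a := Fin.rev_lt_rev.mpr hab
      have h2 : e (Fin.rev b) < e (Fin.rev a) := (T.orderEmbOfFin hT).strictMono h1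
      exact Fin.rev_lt_rev.mpr h2
    have := le_apply_of_strictMono hsm (Fin.rev j)
    simp only [Fin.rev_rev, Fin.val_rev] at this
    have h3 : (j : ℕ) < k := j.isLt
    have h4 : (e j : ℕ) < n := (e j).isLt
    omega
  -- describe the filter set as an image
  have himg : Finset.univ.image (fun j : Fin k => (⟨n - k + (j : ℕ), by omega⟩ : Fin n))
      = Finset.univ.filter (fun i : Fin n => n - k ≤ (i : ℕ)) := by
    ext x
    simp only [Finset.mem_image, Finset.mem_univ, true_and, Finset.mem_filter]
    constructor
    · rintro ⟨j, rfl⟩; simp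
    · intro hx
      refine ⟨⟨(x : ℕ) - (n - k), by omega⟩, ?_⟩
      ext; simp; omega
  have hf : ∏ i ∈ Finset.univ.filter (fun i : Fin n => n - k ≤ (i : ℕ)), σ i
      = ∏ j : Fin k, σ ⟨n - k + (j : ℕ), by omega⟩ := by
    rw [← himg, Finset.prod_image]
    intro a _ b _ h
    have : n - k + (a : ℕ) = n - k + (b : ℕ) := congrArg Fin.val h
    exact Fin.ext (by omega)
  rw [hf, ← he]
  apply Finset.prod_le_prod (fun _ _ => hpos _)
  intro j _
  exact hanti (by rw [Fin.le_def]; simpa using hbd j)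

lemma exists_perm_comp {n : ℕ} (μ ν : Fin n → ℝ)
    (h : Multiset.map μ Finset.univ.val = Multiset.map ν Finset.univ.val) :
    ∃ e : Equiv.Perm (Fin n), ∀ i, μ i = ν (e i) := by
  have hlist : (List.ofFn μ : Multiset ℝ) = (List.ofFn ν : Multiset ℝ) := by
    rwa [Fin.univ_val_map, Fin.univ_val_map] at h
  have hperm : List.Perm (List.ofFn μ) (List.ofFn ν) := Multiset.coe_eq_coe.mp hlist
  set sμ := Tuple.sort μ
  set sν := Tuple.sort ν
  have h1 : List.Perm (List.ofFn (μ ∘ sμ)) (List.ofFn (ν ∘ sν)) :=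
    ((sμ.ofFn_comp_perm μ).trans hperm).trans (sν.ofFn_comp_perm ν).symm
  have h2 : List.ofFn (μ ∘ sμ) = List.ofFn (ν ∘ sν) :=
    List.Perm.eq_of_sortedLE (Tuple.monotone_sort μ).sortedLE_ofFn
      (Tuple.monotone_sort ν).sortedLE_ofFn h1
  have h3 : μ ∘ sμ = ν ∘ sν := List.ofFn_injective h2
  refine ⟨sμ.symm.trans sν, fun i => ?_⟩
  have := congrFun h3 (sμ.symm i)
  simpa using this

lemma charpoly_diagonal_fin {n : ℕ} (d : Fin n → ℝ) :
    (Matrix.diagonal d).charpoly = ∏ j, (X - C (d j)) := by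
  rw [Matrix.charpoly]
  have : charmatrix (Matrix.diagonal d) = Matrix.diagonal (fun j => (X : ℝ[X]) - C (d j)) := by
    ext i j
    by_cases hij : i = j
    · subst hij; simp [charmatrix_apply_eq]
    · simp [charmatrix_apply_ne _ _ _ hij, Matrix.diagonal_apply_ne _ hij]
  rw [this, Matrix.det_diagonal]

lemma charpoly_unitary_conj {n : ℕ} (U D : Matrix (Fin n) (Fin n) ℝ)
    (hU : U * Uᵀ = 1) (hU' : Uᵀ * U = 1) :
    (U * D * Uᵀ).charpoly = D.charpoly := by
  rw [Matrix.charpoly, Matrix.charpoly]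
  have hcm : charmatrix (U * D * Uᵀ)
      = (U.map C) * charmatrix D * (Uᵀ.map C) := by
    rw [charmatrix, charmatrix, Matrix.mul_sub, Matrix.sub_mul]
    congr 1
    · rw [Matrix.scalar_apply, ← Matrix.smul_one_eq_diagonal, mul_smul_comm, smul_mul_assoc, mul_one, ← Matrix.map_mul, hU, Matrix.map_one _ (map_zero C) (map_one C)]
    · simp only [RingHom.mapMatrix_apply, Matrix.map_mul]
  rw [hcm, Matrix.det_mul, Matrix.det_mul, mul_comm, ← mul_assoc, ← Matrix.det_mul,
    ← Matrix.map_mul, hU', Matrix.map_one _ (map_zero C) (map_one C), Matrix.det_one, one_mul]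

noncomputable def dsub {n k : ℕ} (W : Matrix (Fin n) (Fin k) ℝ) (S : Finset (Fin n)) : ℝ :=
  if h : S.card = k then (W.submatrix (fun j => S.orderEmbOfFin h j) id).det else 0

lemma det_expand {n k : ℕ} (d : Fin n → ℝ) (W : Matrix (Fin n) (Fin k) ℝ) :
    (Wᵀ * Matrix.diagonal d * W).det
      = ∑ r : Fin k → Fin n, (∏ j, (d (r j) * W (r j) j)) * (W.submatrix r id).det := by
  have hM : (Wᵀ * Matrix.diagonal d * W)
      = Matrix.of (fun j => ∑ i : Fin n, (d i * W i j) • (fun l => W i l)) := by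
    ext j l
    simp only [Matrix.mul_apply, Matrix.mul_diagonal, Matrix.transpose_apply, Matrix.of_apply,
      Finset.sum_apply, Pi.smul_apply, smul_eq_mul]
    refine Finset.sum_congr rfl (fun i _ => ?_)
    have hx : ∀ x, W x j * Matrix.diagonal d x i = if x = i then W i j * d i else 0 := by
      intro x; by_cases h : x = i <;> simp [h, Matrix.diagonal_apply]
    rw [Finset.sum_congr rfl (fun x _ => hx x), Finset.sum_ite_eq' Finset.univ i
      (fun _ => W i j * d i), if_pos (Finset.mem_univ i)]
    ring
  rw [hM]
  have hdet : (Matrix.of (fun j => ∑ i : Fin n, (d i * W i j) • (fun l => W i l))).det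
      = (Matrix.detRowAlternating (R := ℝ) (n := Fin k)).toMultilinearMap
          (fun j => ∑ i : Fin n, (d i * W i j) • (fun l => W i l)) := rfl
  rw [hdet, MultilinearMap.map_sum]
  apply Finset.sum_congr rfl
  intro r _
  rw [MultilinearMap.map_smul_univ]
  rfl

lemma fiber_sum {n k : ℕ} (d : Fin n → ℝ) (W : Matrix (Fin n) (Fin k) ℝ)
    (S : Finset (Fin n)) (hS : S.card = k) :
    ∑ r ∈ (Finset.univ.filter (fun r : Fin k → Fin n => Function.Injective r)).filter
        (fun r => Finset.univ.image r = S),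
      (∏ j, (d (r j) * W (r j) j)) * (W.submatrix r id).det
    = (∏ i ∈ S, d i) * (dsub W S) ^ 2 := by
  set e := fun j => S.orderEmbOfFin hS j with he_def
  have hinj : Function.Injective e := (S.orderEmbOfFin hS).injective
  have hde : ∏ j, d (e j) = ∏ i ∈ S, d i := by
    rw [← image_orderEmbOfFin S hS, Finset.prod_image (fun a _ b _ h => hinj h)]
  have hsum := Finset.sum_bij
    (s := (Finset.univ : Finset (Equiv.Perm (Fin k))))
    (t := (Finset.univ.filter (fun r : Fin k → Fin n => Function.Injective r)).filter
        (fun r => Finset.univ.image r = S))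
    (f := fun π : Equiv.Perm (Fin k) =>
      (Equiv.Perm.sign π : ℝ) * ((∏ i ∈ S, d i) * ((∏ j, W (e (π j)) j) * (W.submatrix e id).det)))
    (g := fun r => (∏ j, (d (r j) * W (r j) j)) * (W.submatrix r id).det)
    (i := fun π _ => fun j => e (π j))
    ?_ ?_ ?_ ?_
  · rw [← hsum]
    have hdet : (W.submatrix e id).det = dsub W S := by rw [dsub, dif_pos hS]
    calc ∑ π : Equiv.Perm (Fin k),
          (Equiv.Perm.sign π : ℝ) * ((∏ i ∈ S, d i) * ((∏ j, W (e (π j)) j) * (W.submatrix e id).det))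
        = (∏ i ∈ S, d i) * (W.submatrix e id).det
            * ∑ π : Equiv.Perm (Fin k), (Equiv.Perm.sign π : ℝ) * ∏ j, W (e (π j)) j := by
          rw [Finset.mul_sum]; exact Finset.sum_congr rfl (fun π _ => by ring)
      _ = (∏ i ∈ S, d i) * (W.submatrix e id).det * (W.submatrix e id).det := by
          congr 1
          rw [Matrix.det_apply' (W.submatrix e id)]
          exact (Finset.sum_congr rfl (fun π _ => by simp [Matrix.submatrix_apply])).symm
      _ = (∏ i ∈ S, d i) * (dsub W S) ^ 2 := by rw [hdet]; ring
  · intro π _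
    simp only [Finset.mem_filter, Finset.mem_univ, true_and]
    constructor
    · exact hinj.comp π.injective
    · rw [show (fun j => e (π j)) = e ∘ π from rfl, ← Finset.image_image,
        Finset.image_univ_equiv, image_orderEmbOfFin S hS]
  · intro π1 _ π2 _ h
    have h' : ∀ j, e (π1 j) = e (π2 j) := fun j => congrFun h j
    exact Equiv.ext fun j => π1.injective.eq_iff.mp (π1.injective.eq_iff.mpr (hinj (h' j)))
  · intro r hr
    simp only [Finset.mem_filter, Finset.mem_univ, true_and] at hr
    obtain ⟨hrinj, hrimg⟩ := hr
    have hmem : ∀ j, r j ∈ S := by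
      intro j; rw [← hrimg]; exact Finset.mem_image_of_mem r (Finset.mem_univ j)
    set π0 : Fin k → Fin k := fun j => (S.orderIsoOfFin hS).symm ⟨r j, hmem j⟩ with hπ0
    have hπinj : Function.Injective π0 := by
      intro a b hab
      apply hrinj
      have h2 := congrArg (fun x => ((S.orderIsoOfFin hS) x : Fin n)) hab
      simp only [hπ0, OrderIso.apply_symm_apply] at h2
      exact h2
    refine ⟨Equiv.ofBijective π0 (Finite.injective_iff_bijective.mp hπinj), Finset.mem_univ _, ?_⟩
    funext j
    show S.orderEmbOfFin hS (π0 j) = r j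
    rw [← Finset.coe_orderIsoOfFin_apply]
    simp only [hπ0, OrderIso.apply_symm_apply]
  · intro π _
    show (Equiv.Perm.sign π : ℝ) * ((∏ i ∈ S, d i) * ((∏ j, W (e (π j)) j) * (W.submatrix e id).det))
      = (∏ j, (d (e (π j)) * W (e (π j)) j)) * (W.submatrix (fun j => e (π j)) id).det
    have hsub : W.submatrix (fun j => e (π j)) id = (W.submatrix e id).submatrix π id := by
      rw [Matrix.submatrix_submatrix]; rfl
    rw [hsub, Matrix.det_permute, Finset.prod_mul_distrib,
      Equiv.prod_comp π (fun j => d (e j)), hde]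
    push_cast
    ring

lemma cauchy_binet_diag {n k : ℕ} (d : Fin n → ℝ) (W : Matrix (Fin n) (Fin k) ℝ) :
    (Wᵀ * Matrix.diagonal d * W).det
      = ∑ S ∈ Finset.powersetCard k (Finset.univ : Finset (Fin n)),
          (∏ i ∈ S, d i) * (dsub W S) ^ 2 := by
  rw [det_expand]
  have hzero : ∀ r : Fin k → Fin n, ¬ Function.Injective r → (W.submatrix r id).det = 0 := by
    intro r hr
    rw [Function.not_injective_iff] at hr
    obtain ⟨a, b, hab, hne⟩ := hr
    exact Matrix.det_zero_of_row_eq hne (by funext l; simp [Matrix.submatrix_apply, hab])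
  rw [← Finset.sum_filter_add_sum_filter_not Finset.univ
    (fun r : Fin k → Fin n => Function.Injective r)]
  have h2 : ∑ r ∈ Finset.univ.filter (fun r : Fin k → Fin n => ¬ Function.Injective r),
      (∏ j, (d (r j) * W (r j) j)) * (W.submatrix r id).det = 0 := by
    apply Finset.sum_eq_zero
    intro r hr
    rw [hzero r (Finset.mem_filter.mp hr).2, mul_zero]
  rw [h2, add_zero]
  have hmaps : ∀ r ∈ Finset.univ.filter (fun r : Fin k → Fin n => Function.Injective r),
      Finset.univ.image r ∈ Finset.powersetCard k (Finset.univ : Finset (Fin n)) := by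
    intro r hr
    rw [Finset.mem_powersetCard_univ, Finset.card_image_of_injective _
      (Finset.mem_filter.mp hr).2, Finset.card_univ, Fintype.card_fin]
  rw [← Finset.sum_fiberwise_of_maps_to hmaps]
  apply Finset.sum_congr rfl
  intro S hSmem
  exact fiber_sum d W S (Finset.mem_powersetCard_univ.mp hSmem)

open scoped BigOperators
open Matrix Polynomial in
/-- Gram determinant bounds under an invertible linear map:
`(∏_{i=n−k+1}^{n} σ_i)² · det(VᵀV) ≤ det((AV)ᵀ(AV)) ≤ (∏_{i=1}^{k} σ_i)² · det(VᵀV)`. -/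
theorem gram_det_bounds_of_singularValues
    (n k : ℕ) (hk : k ≤ n)
    (V : Matrix (Fin n) (Fin k) ℝ)
    (A : Matrix (Fin n) (Fin n) ℝ) (hA : IsUnit A.det)
    (σ : Fin n → ℝ) (hσ_anti : Antitone σ) (hσ_nonneg : ∀ j, 0 ≤ σ j)
    (hσ : (Aᵀ * A).charpoly = ∏ j, (X - C (σ j ^ 2))) :
    (∏ i ∈ Finset.univ.filter (fun i : Fin n => n - k ≤ (i : ℕ)), σ i) ^ 2
        * (Vᵀ * V).det ≤ ((A * V)ᵀ * (A * V)).det ∧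
      ((A * V)ᵀ * (A * V)).det ≤
        (∏ i ∈ Finset.univ.filter (fun i : Fin n => (i : ℕ) < k), σ i) ^ 2
          * (Vᵀ * V).det := by
  classical
  have hB : (Aᵀ * A).IsHermitian := by
    rw [Matrix.IsHermitian, Matrix.conjTranspose_eq_transpose_of_trivial,
      Matrix.transpose_mul, Matrix.transpose_transpose]
  set U : Matrix (Fin n) (Fin n) ℝ := (hB.eigenvectorUnitary : Matrix (Fin n) (Fin n) ℝ) with hUdef
  set μ : Fin n → ℝ := hB.eigenvalues with hμdef
  have hmem := (hB.eigenvectorUnitary).2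
  have hU1 : U * Uᵀ = 1 := by
    have := (Matrix.mem_unitaryGroup_iff).mp hmem
    rwa [Matrix.star_eq_conjTranspose, Matrix.conjTranspose_eq_transpose_of_trivial] at this
  have hU2 : Uᵀ * U = 1 := by
    have := (Matrix.mem_unitaryGroup_iff').mp hmem
    rwa [Matrix.star_eq_conjTranspose, Matrix.conjTranspose_eq_transpose_of_trivial] at this
  have hspec : Aᵀ * A = U * Matrix.diagonal μ * Uᵀ := by
    have := hB.spectral_theorem
    rwa [Unitary.conjStarAlgAut_apply, Matrix.star_eq_conjTranspose,
      Matrix.conjTranspose_eq_transpose_of_trivial] at this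
  -- multiset of eigenvalues equals multiset of squared singular values
  have hprod : ∏ j, (X - C (μ j)) = ∏ j, (X - C (σ j ^ 2)) := by
    rw [← charpoly_diagonal_fin, ← hσ]
    conv_rhs => rw [hspec]
    exact (charpoly_unitary_conj U (Matrix.diagonal μ) hU1 hU2).symm
  have hroots : ∀ f : Fin n → ℝ, (∏ j, (X - C (f j))).roots = Multiset.map f Finset.univ.val := by
    intro f
    rw [Finset.prod_eq_multiset_prod]
    have hmm : Multiset.map (fun j => X - C (f j)) Finset.univ.val
        = Multiset.map (fun a => X - C a) (Multiset.map f Finset.univ.val) := by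
      rw [Multiset.map_map]; rfl
    rw [hmm, Polynomial.roots_multiset_prod_X_sub_C]
  have hms : Multiset.map μ Finset.univ.val = Multiset.map (fun j => σ j ^ 2) Finset.univ.val := by
    have h1 := congrArg Polynomial.roots hprod
    rwa [hroots, hroots] at h1
  obtain ⟨e, he⟩ := exists_perm_comp μ (fun j => σ j ^ 2) hms
  -- reduce to diagonal form
  set W : Matrix (Fin n) (Fin k) ℝ := Uᵀ * V with hWdef
  have hAV : (A * V)ᵀ * (A * V) = Wᵀ * Matrix.diagonal μ * W := by
    have h0 : (A * V)ᵀ * (A * V) = Vᵀ * (Aᵀ * A) * V := by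
      rw [Matrix.transpose_mul]; simp only [Matrix.mul_assoc]
    rw [h0, hspec, hWdef, Matrix.transpose_mul, Matrix.transpose_transpose]
    simp only [Matrix.mul_assoc]
  have hVV : Vᵀ * V = Wᵀ * Matrix.diagonal (fun _ : Fin n => (1 : ℝ)) * W := by
    rw [Matrix.diagonal_one, Matrix.mul_one, hWdef, Matrix.transpose_mul,
      Matrix.transpose_transpose, Matrix.mul_assoc, ← Matrix.mul_assoc U, hU1, Matrix.one_mul]
  rw [hAV, hVV, cauchy_binet_diag, cauchy_binet_diag]
  have hsimp1 : ∀ S ∈ Finset.powersetCard k (Finset.univ : Finset (Fin n)),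
      ((∏ i ∈ S, (1:ℝ)) * (dsub W S) ^ 2) = (dsub W S) ^ 2 := by
    intro S _; rw [Finset.prod_const_one, one_mul]
  rw [Finset.sum_congr rfl hsimp1]
  -- per-subset bounds
  set Plo : ℝ := ∏ i ∈ Finset.univ.filter (fun i : Fin n => n - k ≤ (i : ℕ)), σ i with hPlo
  set Phi : ℝ := ∏ i ∈ Finset.univ.filter (fun i : Fin n => (i : ℕ) < k), σ i with hPhi
  have hbound : ∀ S ∈ Finset.powersetCard k (Finset.univ : Finset (Fin n)),
      Plo ^ 2 ≤ ∏ i ∈ S, μ i ∧ ∏ i ∈ S, μ i ≤ Phi ^ 2 := by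
    intro S hSmem
    have hS : S.card = k := Finset.mem_powersetCard_univ.mp hSmem
    have hμS : ∏ i ∈ S, μ i = (∏ i ∈ S.image e, σ i) ^ 2 := by
      rw [Finset.prod_image (fun a _ b _ h => e.injective h), ← Finset.prod_pow]
      exact Finset.prod_congr rfl (fun i _ => he i)
    have hT : (S.image e).card = k := by
      rw [Finset.card_image_of_injective _ e.injective, hS]
    constructor
    · rw [hμS]
      exact pow_le_pow_left₀ (Finset.prod_nonneg (fun _ _ => hσ_nonneg _))
        (bottom_le_prod hk hσ_anti hσ_nonneg _ hT) 2
    · rw [hμS]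
      exact pow_le_pow_left₀ (Finset.prod_nonneg (fun _ _ => hσ_nonneg _))
        (prod_le_top hk hσ_anti hσ_nonneg _ hT) 2
  constructor
  · rw [Finset.mul_sum]
    apply Finset.sum_le_sum
    intro S hSmem
    exact mul_le_mul_of_nonneg_right (hbound S hSmem).1 (sq_nonneg _)
  · rw [Finset.mul_sum]
    apply Finset.sum_le_sum
    intro S hSmem
    exact mul_le_mul_of_nonneg_right (hbound S hSmem).2 (sq_nonneg _)
end

section
/- Let X be a normed space, V an N-dimensional subspace, {T_i}_{i∈ℕ} ⊂ X' with ‖T_i‖ ≤ 1 a determining family for V, w ∈ ℓ¹ positive, and let P : X → V be the weighted least squares projector with orthonormal basis η₁,…,η_N of V for (x,y)_{T,w} = Σ_i w_i T_i(x) T_i(y). Then for every x ∈ X and every S ∈ X' with ‖S‖ ≤ 1: |S(Px)| ≤ ‖x‖ · Σ_{i=1}^∞ |Σ_{h=1}^N T_i(η_h) S(η_h)| · w_i. Consequently ‖P‖_op ≤ sup_{‖S‖≤1} Σ_i |Σ_h T_i(η_h) S(η_h)| w_i (the Lebesgue constant bounds the projector norm). -/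
open scoped BigOperators

/-- The Lebesgue constant bounds the weighted least squares projector:
`|S(Px)| ≤ ‖x‖ · Σ_i |Σ_h T_i(η_h) S(η_h)| w_i` for every `‖S‖ ≤ 1`, and consequently
`‖P x‖ ≤ ‖x‖ ·` (Lebesgue constant). -/
theorem projector_norm_le_lebesgue_constant
    (X : Type*) [NormedAddCommGroup X] [NormedSpace ℝ X]
    (V : Subspace ℝ X) (N : ℕ)
    (T : ℕ → (X →L[ℝ] ℝ)) (hT : ∀ i, ‖T i‖ ≤ 1)
    (hdet : ∀ v ∈ V, (∀ i, T i v = 0) → v = 0)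
    (w : ℕ → ℝ) (hw_pos : ∀ i, 0 < w i) (hw_sum : Summable w)
    (η : Fin N → V)
    (hspan : Submodule.span ℝ (Set.range fun h => (η h : X)) = V)
    (hortho : ∀ h k, (∑' i, w i * T i (η h : X) * T i (η k : X)) =
      if h = k then 1 else 0)
    (P : X → X)
    (hP : ∀ x, P x = ∑ h, (∑' i, w i * T i x * T i (η h : X)) • (η h : X)) :
    (∀ (x : X) (S : X →L[ℝ] ℝ), ‖S‖ ≤ 1 →
      |S (P x)| ≤ ‖x‖ * ∑' i, |∑ h, T i (η h : X) * S (η h : X)| * w i) ∧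
      ∀ x : X, ‖P x‖ ≤ ‖x‖ * sSup {c : ℝ | ∃ S : X →L[ℝ] ℝ, ‖S‖ ≤ 1 ∧
        c = ∑' i, |∑ h, T i (η h : X) * S (η h : X)| * w i} := by
  have hTx : ∀ (i : ℕ) (y : X), |T i y| ≤ ‖y‖ := by
    intro i y
    calc |T i y| ≤ ‖T i‖ * ‖y‖ := (T i).le_opNorm y
    _ ≤ 1 * ‖y‖ := mul_le_mul_of_nonneg_right (hT i) (norm_nonneg y)
    _ = ‖y‖ := one_mul _
  set C : ℝ := ∑ h, ‖(η h : X)‖ * ‖(η h : X)‖ with hC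
  have hC0 : 0 ≤ C := Finset.sum_nonneg fun h _ => mul_nonneg (norm_nonneg _) (norm_nonneg _)
  have hsum1 : ∀ (x y : X) (c : ℝ), Summable fun i => w i * T i x * T i y * c := by
    intro x y c
    apply Summable.of_norm_bounded (g := fun i => w i * (‖x‖ * ‖y‖ * |c|)) (hw_sum.mul_right _)
    intro i
    simp only [Real.norm_eq_abs, abs_mul, abs_of_nonneg (hw_pos i).le]
    calc w i * |T i x| * |T i y| * |c| ≤ w i * ‖x‖ * ‖y‖ * |c| := by
          gcongr <;> first
            | exact hTx i x
            | exact hTx i y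
            | exact (hw_pos i).le
            | exact mul_nonneg (hw_pos i).le (norm_nonneg _)
            | exact abs_nonneg _
    _ = w i * (‖x‖ * ‖y‖ * |c|) := by ring
  -- bound on |A i| for ‖S‖ ≤ 1
  have hA : ∀ (S : X →L[ℝ] ℝ), ‖S‖ ≤ 1 → ∀ i,
      |∑ h, T i (η h : X) * S (η h : X)| ≤ C := by
    intro S hS i
    calc |∑ h, T i (η h : X) * S (η h : X)| ≤ ∑ h, |T i (η h : X) * S (η h : X)| :=
          Finset.abs_sum_le_sum_abs _ _
    _ ≤ C := by
        apply Finset.sum_le_sum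
        intro h _
        rw [abs_mul]
        have hSh : |S (η h : X)| ≤ ‖(η h : X)‖ := by
          calc |S (η h : X)| ≤ ‖S‖ * ‖(η h : X)‖ := S.le_opNorm _
          _ ≤ 1 * ‖(η h : X)‖ := mul_le_mul_of_nonneg_right hS (norm_nonneg _)
          _ = _ := one_mul _
        exact mul_le_mul (hTx i _) hSh (abs_nonneg _) (norm_nonneg _)
  have hsumA : ∀ (S : X →L[ℝ] ℝ), ‖S‖ ≤ 1 →
      Summable fun i => |∑ h, T i (η h : X) * S (η h : X)| * w i := by
    intro S hS
    apply Summable.of_nonneg_of_le (fun i => mul_nonneg (abs_nonneg _) (hw_pos i).le)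
      (fun i => mul_le_mul_of_nonneg_right (hA S hS i) (hw_pos i).le) (hw_sum.mul_left C)
  -- key identity
  have key : ∀ (x : X) (S : X →L[ℝ] ℝ),
      S (P x) = ∑' i, w i * T i x * (∑ h, T i (η h : X) * S (η h : X)) := by
    intro x S
    rw [hP, map_sum]
    simp only [map_smul, smul_eq_mul]
    have h1 : ∀ h : Fin N, (∑' i, w i * T i x * T i (η h : X)) * S (η h : X)
        = ∑' i, w i * T i x * T i (η h : X) * S (η h : X) := fun h => (tsum_mul_right).symm
    simp only [h1]
    rw [← Summable.tsum_finsetSum (fun h _ => hsum1 x (η h : X) _)]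
    congr 1
    funext i
    rw [Finset.mul_sum]
    congr 1
    funext h
    ring
  have main : ∀ (x : X) (S : X →L[ℝ] ℝ), ‖S‖ ≤ 1 →
      |S (P x)| ≤ ‖x‖ * ∑' i, |∑ h, T i (η h : X) * S (η h : X)| * w i := by
    intro x S hS
    rw [key x S]
    have hsg : Summable fun i => ‖w i * T i x * (∑ h, T i (η h : X) * S (η h : X))‖ := by
      apply Summable.of_nonneg_of_le (fun i => norm_nonneg _) _
        ((hsumA S hS).mul_left ‖x‖)
      intro i
      simp only [Real.norm_eq_abs, abs_mul, abs_of_nonneg (hw_pos i).le]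
      calc w i * |T i x| * |∑ h, T i (η h : X) * S (η h : X)|
          ≤ w i * ‖x‖ * |∑ h, T i (η h : X) * S (η h : X)| := by
            gcongr
            · exact (hw_pos i).le
            · exact hTx i x
      _ = ‖x‖ * (|∑ h, T i (η h : X) * S (η h : X)| * w i) := by ring
    calc |∑' i, w i * T i x * (∑ h, T i (η h : X) * S (η h : X))|
        ≤ ∑' i, ‖w i * T i x * (∑ h, T i (η h : X) * S (η h : X))‖ :=
          norm_tsum_le_tsum_norm hsg
    _ ≤ ∑' i, ‖x‖ * (|∑ h, T i (η h : X) * S (η h : X)| * w i) := by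
        apply Summable.tsum_le_tsum _ hsg ((hsumA S hS).mul_left ‖x‖)
        intro i
        simp only [Real.norm_eq_abs, abs_mul, abs_of_nonneg (hw_pos i).le]
        calc w i * |T i x| * |∑ h, T i (η h : X) * S (η h : X)|
            ≤ w i * ‖x‖ * |∑ h, T i (η h : X) * S (η h : X)| := by
              gcongr
              · exact (hw_pos i).le
              · exact hTx i x
        _ = ‖x‖ * (|∑ h, T i (η h : X) * S (η h : X)| * w i) := by ring
    _ = ‖x‖ * ∑' i, |∑ h, T i (η h : X) * S (η h : X)| * w i := tsum_mul_left
  refine ⟨main, ?_⟩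
  intro x
  obtain ⟨S, hS, hSx⟩ := exists_dual_vector'' ℝ (P x)
  have hbdd : BddAbove {c : ℝ | ∃ S : X →L[ℝ] ℝ, ‖S‖ ≤ 1 ∧
      c = ∑' i, |∑ h, T i (η h : X) * S (η h : X)| * w i} := by
    refine ⟨C * ∑' i, w i, ?_⟩
    rintro c ⟨S', hS', rfl⟩
    calc (∑' i, |∑ h, T i (η h : X) * S' (η h : X)| * w i)
        ≤ ∑' i, C * w i := by
          apply Summable.tsum_le_tsum _ (hsumA S' hS') (hw_sum.mul_left C)
          intro i
          exact mul_le_mul_of_nonneg_right (hA S' hS' i) (hw_pos i).le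
    _ = C * ∑' i, w i := tsum_mul_left
  have hmem : (∑' i, |∑ h, T i (η h : X) * S (η h : X)| * w i) ∈
      {c : ℝ | ∃ S : X →L[ℝ] ℝ, ‖S‖ ≤ 1 ∧
      c = ∑' i, |∑ h, T i (η h : X) * S (η h : X)| * w i} := ⟨S, hS, rfl⟩
  calc ‖P x‖ = S (P x) := by
        have := hSx
        simpa using this.symm
  _ ≤ |S (P x)| := le_abs_self _
  _ ≤ ‖x‖ * ∑' i, |∑ h, T i (η h : X) * S (η h : X)| * w i := main x S hS
  _ ≤ ‖x‖ * sSup _ := mul_le_mul_of_nonneg_left (le_csSup hbdd hmem) (norm_nonneg x)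
end

section
/- Let X be a Banach space, V ⊂ X an N-dimensional subspace, w ∈ ℓ¹ positive, and for ε ≥ 0 let {T_i^{(ε)}}_{i∈ℕ} ⊂ X' with ‖T_i^{(ε)}‖ ≤ 1 be families converging uniformly to {T_i} as ε → 0, meaning sup_{‖x‖=1} Σ_i |T_i(x) − T_i^{(ε)}(x)| w_i → 0. Suppose {T_i} is determining for V. Then for any fixed basis ϑ₁,…,ϑ_N of V, the Gram matrices G^{(ε)} := [Σ_i w_i T_i^{(ε)}(ϑ_h) T_i^{(ε)}(ϑ_k)]_{h,k} converge entrywise to G := [Σ_i w_i T_i(ϑ_h) T_i(ϑ_k)]_{h,k}, with |G^{(ε)}_{hk} − G_{hk}| ≤ 2‖ϑ_h‖‖ϑ_k‖ · sup_{‖x‖=1} Σ_i |T_i(x) − T_i^{(ε)}(x)| w_i. In particular G^{(ε)} is positive definite for all sufficiently small ε, so {T_i^{(ε)}} is determining for V. -/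
open scoped BigOperators Topology

lemma summable_of_abs_le' {f g : ℕ → ℝ} (hg : Summable g) (h : ∀ i, |f i| ≤ g i) :
    Summable f :=
  summable_abs_iff.mp (Summable.of_nonneg_of_le (fun i => abs_nonneg _) h hg)

lemma summable_w_mul {X : Type*} [NormedAddCommGroup X] [NormedSpace ℝ X]
    (w : ℕ → ℝ) (hw0 : ∀ i, 0 ≤ w i) (hw : Summable w)
    (S S' : ℕ → X →L[ℝ] ℝ) (hS : ∀ i, ‖S i‖ ≤ 1) (hS' : ∀ i, ‖S' i‖ ≤ 1)
    (y z : X) : Summable (fun i => w i * S i y * S' i z) := by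
  refine summable_of_abs_le' ((hw.mul_left (‖y‖ * ‖z‖))) (fun i => ?_)
  have h1 : |S i y| ≤ ‖y‖ := by
    have := (S i).le_opNorm y
    rw [← Real.norm_eq_abs]
    exact this.trans (by nlinarith [hS i, norm_nonneg y, norm_nonneg (S i y)])
  have h2 : |S' i z| ≤ ‖z‖ := by
    have := (S' i).le_opNorm z
    rw [← Real.norm_eq_abs]
    exact this.trans (by nlinarith [hS' i, norm_nonneg z])
  rw [abs_mul, abs_mul, abs_of_nonneg (hw0 i)]
  calc w i * |S i y| * |S' i z| ≤ w i * ‖y‖ * ‖z‖ := by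
        apply mul_le_mul (mul_le_mul_of_nonneg_left h1 (hw0 i)) h2 (abs_nonneg _)
        exact mul_nonneg (hw0 i) (norm_nonneg _)
    _ = ‖y‖ * ‖z‖ * w i := by ring

lemma quad_helper {X : Type*} [NormedAddCommGroup X] [NormedSpace ℝ X]
    {N : ℕ} (w : ℕ → ℝ) (hw0 : ∀ i, 0 ≤ w i) (hw : Summable w)
    (S : ℕ → X →L[ℝ] ℝ) (hS : ∀ i, ‖S i‖ ≤ 1) (u : Fin N → X)
    (M : Matrix (Fin N) (Fin N) ℝ)
    (hM : ∀ h k, M h k = ∑' i, w i * S i (u h) * S i (u k))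
    (c : Fin N → ℝ) :
    dotProduct c (M.mulVec c) = ∑' i, w i * (S i (∑ h, c h • u h)) ^ 2 := by
  have hsum : ∀ h k : Fin N,
      Summable (fun i => c h * (w i * S i (u h) * S i (u k) * c k)) :=
    fun h k => ((summable_w_mul w hw0 hw S S hS hS (u h) (u k)).mul_right (c k)).mul_left (c h)
  calc dotProduct c (M.mulVec c)
      = ∑ h, ∑ k, c h * (M h k * c k) := by
        simp [dotProduct, Matrix.mulVec, Finset.mul_sum]
    _ = ∑ h, ∑ k, ∑' i, c h * (w i * S i (u h) * S i (u k) * c k) := by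
        refine Finset.sum_congr rfl fun h _ => Finset.sum_congr rfl fun k _ => ?_
        rw [hM, ← tsum_mul_right, ← tsum_mul_left]
    _ = ∑' i, ∑ h, ∑ k, c h * (w i * S i (u h) * S i (u k) * c k) := by
        rw [show (∑ h, ∑ k, ∑' i, c h * (w i * S i (u h) * S i (u k) * c k))
            = ∑ h : Fin N, ∑' i, ∑ k, c h * (w i * S i (u h) * S i (u k) * c k) from
          Finset.sum_congr rfl fun h _ => (Summable.tsum_finsetSum (fun k _ => hsum h k)).symm]
        exact (Summable.tsum_finsetSum (fun h _ => summable_sum (fun k _ => hsum h k))).symm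
    _ = ∑' i, w i * (S i (∑ h, c h • u h)) ^ 2 := by
        refine tsum_congr fun i => ?_
        have : S i (∑ h, c h • u h) = ∑ h, c h * S i (u h) := by
          simp [map_sum, map_smul, smul_eq_mul]
        rw [this, sq, Finset.sum_mul_sum, Finset.mul_sum]
        refine Finset.sum_congr rfl fun h _ => ?_
        rw [Finset.mul_sum]
        refine Finset.sum_congr rfl fun k _ => by ring

/-- Uniform convergence of the sampling families implies entrywise convergence of the
Gram matrices, with the explicit bound
`|G^{(ε)}_{hk} − G_{hk}| ≤ 2‖ϑ_h‖‖ϑ_k‖ · sup_{‖x‖=1} Σ_i |T_i(x) − T_i^{(ε)}(x)| w_i`;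
hence `G^{(ε)}` is positive definite and `{T_i^{(ε)}}` is determining for small `ε`. -/
theorem gram_matrix_convergence_of_uniform_convergence
    (X : Type*) [NormedAddCommGroup X] [NormedSpace ℝ X] [CompleteSpace X]
    (V : Subspace ℝ X) (N : ℕ) (hN : 0 < N) (ϑ : Module.Basis (Fin N) ℝ V)
    (w : ℕ → ℝ) (hw_pos : ∀ i, 0 < w i) (hw_sum : Summable w)
    (T : ℕ → (X →L[ℝ] ℝ)) (hT : ∀ i, ‖T i‖ ≤ 1)
    (hdet : ∀ v ∈ V, (∀ i, T i v = 0) → v = 0)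
    (Tε : ℝ → ℕ → (X →L[ℝ] ℝ)) (hTε : ∀ ε i, ‖Tε ε i‖ ≤ 1)
    (D : ℝ → ℝ)
    (hD : ∀ ε, D ε =
      sSup {c : ℝ | ∃ x : X, ‖x‖ = 1 ∧ c = ∑' i, |T i x - Tε ε i x| * w i})
    (hconv : Filter.Tendsto D (𝓝[>] 0) (𝓝 0))
    (G Gε : ℝ → Matrix (Fin N) (Fin N) ℝ)
    (hG : ∀ ε h k, G ε h k = ∑' i, w i * T i (ϑ h : X) * T i (ϑ k : X))
    (hGε : ∀ ε h k, Gε ε h k = ∑' i, w i * Tε ε i (ϑ h : X) * Tε ε i (ϑ k : X)) :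
    (∀ ε > (0:ℝ), ∀ h k,
      |Gε ε h k - G ε h k| ≤ 2 * ‖(ϑ h : X)‖ * ‖(ϑ k : X)‖ * D ε) ∧
    (∀ h k, Filter.Tendsto (fun ε => Gε ε h k) (𝓝[>] 0) (𝓝 (G 0 h k))) ∧
    (∃ ε₀ > (0:ℝ), ∀ ε, 0 < ε → ε < ε₀ →
      (Gε ε).PosDef ∧ ∀ v ∈ V, (∀ i, Tε ε i v = 0) → v = 0) := by
  haveI : Nonempty (Fin N) := ⟨⟨0, hN⟩⟩
  have hw0 : ∀ i, 0 ≤ w i := fun i => (hw_pos i).le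
  have hbT : ∀ (S : X →L[ℝ] ℝ), ‖S‖ ≤ 1 → ∀ y : X, |S y| ≤ ‖y‖ := by
    intro S hS y
    rw [← Real.norm_eq_abs]
    exact (S.le_opNorm y).trans (by nlinarith [norm_nonneg y])
  have hSd_summ : ∀ ε (y : X), Summable (fun i => |T i y - Tε ε i y| * w i) := by
    intro ε y
    refine Summable.of_nonneg_of_le (fun i => mul_nonneg (abs_nonneg _) (hw0 i))
      (fun i => ?_) (hw_sum.mul_left (2 * ‖y‖))
    have h1 : |T i y - Tε ε i y| ≤ 2 * ‖y‖ := by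
      refine (abs_sub _ _).trans ?_
      have := hbT (T i) (hT i) y
      have := hbT (Tε ε i) (hTε ε i) y
      linarith
    calc |T i y - Tε ε i y| * w i ≤ (2 * ‖y‖) * w i :=
          mul_le_mul_of_nonneg_right h1 (hw0 i)
      _ = 2 * ‖y‖ * w i := by ring
  have hmem : ∀ ε (y : X), ‖y‖ = 1 → (∑' i, |T i y - Tε ε i y| * w i) ≤ D ε := by
    intro ε y hy
    rw [hD]
    apply le_csSup
    · refine ⟨2 * ∑' i, w i, ?_⟩
      rintro c ⟨x, hx, rfl⟩
      have hterm : ∀ i, |T i x - Tε ε i x| * w i ≤ 2 * w i := by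
        intro i
        have h1 : |T i x - Tε ε i x| ≤ 2 := by
          refine (abs_sub _ _).trans ?_
          have h2 := hbT (T i) (hT i) x
          have h3 := hbT (Tε ε i) (hTε ε i) x
          rw [hx] at h2 h3; linarith
        exact mul_le_mul_of_nonneg_right h1 (hw0 i)
      calc (∑' i, |T i x - Tε ε i x| * w i) ≤ ∑' i, 2 * w i :=
            Summable.tsum_le_tsum hterm (hSd_summ ε x) (hw_sum.mul_left 2)
        _ = 2 * ∑' i, w i := tsum_mul_left
    · exact ⟨y, hy, rfl⟩
  have hSd : ∀ ε (y : X), (∑' i, |T i y - Tε ε i y| * w i) ≤ ‖y‖ * D ε := by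
    intro ε y
    rcases eq_or_ne y 0 with rfl | hy
    · simp
    · have hny : (0:ℝ) < ‖y‖ := norm_pos_iff.mpr hy
      set x := ‖y‖⁻¹ • y with hx
      have hx1 : ‖x‖ = 1 := by
        rw [hx, norm_smul, norm_inv, norm_norm, inv_mul_cancel₀ hny.ne']
      have hcalc : (∑' i, |T i x - Tε ε i x| * w i)
          = ‖y‖⁻¹ * ∑' i, |T i y - Tε ε i y| * w i := by
        rw [← tsum_mul_left]
        refine tsum_congr fun i => ?_
        have e : T i x - Tε ε i x = ‖y‖⁻¹ * (T i y - Tε ε i y) := by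
          rw [hx]; simp [smul_eq_mul]; ring
        rw [e, abs_mul, abs_of_nonneg (inv_nonneg.mpr hny.le), mul_assoc]
      have h5 := hmem ε x hx1
      rw [hcalc] at h5
      calc (∑' i, |T i y - Tε ε i y| * w i)
          = ‖y‖ * (‖y‖⁻¹ * ∑' i, |T i y - Tε ε i y| * w i) := by
            rw [← mul_assoc, mul_inv_cancel₀ hny.ne', one_mul]
        _ ≤ ‖y‖ * D ε := mul_le_mul_of_nonneg_left h5 (norm_nonneg y)
  have hϑne : ∀ h : Fin N, (ϑ h : X) ≠ 0 := fun h => by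
    simpa using ϑ.ne_zero h
  have hDnn : ∀ ε, 0 ≤ D ε := by
    intro ε
    set h0 : Fin N := ⟨0, hN⟩
    have hn : (0:ℝ) < ‖(ϑ h0 : X)‖ := norm_pos_iff.mpr (hϑne h0)
    set y : X := ‖(ϑ h0 : X)‖⁻¹ • (ϑ h0 : X) with hy
    have hy1 : ‖y‖ = 1 := by
      rw [hy, norm_smul, norm_inv, norm_norm, inv_mul_cancel₀ hn.ne']
    exact le_trans (tsum_nonneg fun i => mul_nonneg (abs_nonneg _) (hw0 i)) (hmem ε y hy1)
  have hbound : ∀ ε h k,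
      |Gε ε h k - G ε h k| ≤ 2 * ‖(ϑ h : X)‖ * ‖(ϑ k : X)‖ * D ε := by
    intro ε h k
    have s1 := summable_w_mul w hw0 hw_sum (Tε ε) (Tε ε) (hTε ε) (hTε ε) (ϑ h : X) (ϑ k : X)
    have s2 := summable_w_mul w hw0 hw_sum T T hT hT (ϑ h : X) (ϑ k : X)
    have sdh := hSd_summ ε (ϑ h : X)
    have sdk := hSd_summ ε (ϑ k : X)
    rw [hGε, hG, ← Summable.tsum_sub s1 s2]
    set g : ℕ → ℝ := fun i =>
      ‖(ϑ k : X)‖ * (|T i (ϑ h : X) - Tε ε i (ϑ h : X)| * w i) +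
      ‖(ϑ h : X)‖ * (|T i (ϑ k : X) - Tε ε i (ϑ k : X)| * w i) with hg
    have hg_summ : Summable g := (sdh.mul_left _).add (sdk.mul_left _)
    have habs : ∀ i, |w i * Tε ε i (ϑ h : X) * Tε ε i (ϑ k : X)
        - w i * T i (ϑ h : X) * T i (ϑ k : X)| ≤ g i := by
      intro i
      have e : w i * Tε ε i (ϑ h : X) * Tε ε i (ϑ k : X)
          - w i * T i (ϑ h : X) * T i (ϑ k : X)
          = w i * ((Tε ε i (ϑ h : X) - T i (ϑ h : X)) * Tε ε i (ϑ k : X))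
          + w i * (T i (ϑ h : X) * (Tε ε i (ϑ k : X) - T i (ϑ k : X))) := by ring
      rw [e]
      refine (abs_add_le _ _).trans ?_
      rw [abs_mul, abs_mul, abs_mul, abs_mul, abs_of_nonneg (hw0 i),
        abs_sub_comm (Tε ε i (ϑ h : X)) (T i (ϑ h : X)),
        abs_sub_comm (Tε ε i (ϑ k : X)) (T i (ϑ k : X)), hg]
      have h1 := hbT (Tε ε i) (hTε ε i) (ϑ k : X)
      have h2 := hbT (T i) (hT i) (ϑ h : X)
      show w i * (|T i (ϑ h : X) - Tε ε i (ϑ h : X)| * |Tε ε i (ϑ k : X)|)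
          + w i * (|T i (ϑ h : X)| * |T i (ϑ k : X) - Tε ε i (ϑ k : X)|)
          ≤ ‖(ϑ k : X)‖ * (|T i (ϑ h : X) - Tε ε i (ϑ h : X)| * w i)
          + ‖(ϑ h : X)‖ * (|T i (ϑ k : X) - Tε ε i (ϑ k : X)| * w i)
      nlinarith [mul_nonneg (sub_nonneg.mpr h1)
          (mul_nonneg (abs_nonneg (T i (ϑ h : X) - Tε ε i (ϑ h : X))) (hw0 i)),
        mul_nonneg (sub_nonneg.mpr h2)
          (mul_nonneg (abs_nonneg (T i (ϑ k : X) - Tε ε i (ϑ k : X))) (hw0 i))]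
    have hfn : Summable (fun i => |w i * Tε ε i (ϑ h : X) * Tε ε i (ϑ k : X)
        - w i * T i (ϑ h : X) * T i (ϑ k : X)|) :=
      Summable.of_nonneg_of_le (fun i => abs_nonneg _) habs hg_summ
    have h3 : |∑' i, (w i * Tε ε i (ϑ h : X) * Tε ε i (ϑ k : X)
        - w i * T i (ϑ h : X) * T i (ϑ k : X))| ≤ ∑' i, g i := by
      rw [← Real.norm_eq_abs]
      refine (norm_tsum_le_tsum_norm (by simpa [Real.norm_eq_abs] using hfn)).trans ?_
      simp only [Real.norm_eq_abs]
      exact Summable.tsum_le_tsum habs hfn hg_summ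
    refine h3.trans ?_
    have h4 : ∑' i, g i = ‖(ϑ k : X)‖ * (∑' i, |T i (ϑ h : X) - Tε ε i (ϑ h : X)| * w i)
        + ‖(ϑ h : X)‖ * (∑' i, |T i (ϑ k : X) - Tε ε i (ϑ k : X)| * w i) := by
      rw [hg, Summable.tsum_add (sdh.mul_left _) (sdk.mul_left _), tsum_mul_left, tsum_mul_left]
    rw [h4]
    have h5 := mul_le_mul_of_nonneg_left (hSd ε (ϑ h : X)) (norm_nonneg (ϑ k : X))
    have h6 := mul_le_mul_of_nonneg_left (hSd ε (ϑ k : X)) (norm_nonneg (ϑ h : X))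
    nlinarith [h5, h6]
  refine ⟨fun ε _ h k => hbound ε h k, ?_, ?_⟩
  · intro h k
    have hGconst : ∀ ε, G ε = G 0 := fun ε => Matrix.ext fun h k => by rw [hG, hG]
    have h0 : Filter.Tendsto (fun ε => Gε ε h k - G 0 h k) (𝓝[>] 0) (𝓝 0) := by
      apply squeeze_zero_norm' (a := fun ε => 2 * ‖(ϑ h : X)‖ * ‖(ϑ k : X)‖ * D ε)
      · filter_upwards [self_mem_nhdsWithin] with ε _
        rw [Real.norm_eq_abs, ← hGconst ε]
        exact hbound ε h k
      · simpa using (hconv.const_mul (2 * ‖(ϑ h : X)‖ * ‖(ϑ k : X)‖))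
    simpa using h0.add_const (G 0 h k)
  · -- Part 3
    have hstar : ∀ c : Fin N → ℝ, star c = c := fun c => funext fun i => star_trivial _
    have hermGε : ∀ ε, (Gε ε).IsHermitian := by
      intro ε
      refine Matrix.ext fun h k => ?_
      rw [Matrix.conjTranspose_apply, hGε, hGε, star_trivial]
      exact tsum_congr fun i => by ring
    have hermG : (G 0).IsHermitian := by
      refine Matrix.ext fun h k => ?_
      rw [Matrix.conjTranspose_apply, hG, hG, star_trivial]
      exact tsum_congr fun i => by ring
    have hvmem : ∀ c : Fin N → ℝ, (∑ h, c h • (ϑ h : X)) ∈ V := fun c =>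
      Submodule.sum_mem V fun h _ => Submodule.smul_mem V _ (ϑ h).2
    have hcoe : ∀ c : Fin N → ℝ, ((∑ h, c h • ϑ h : V) : X) = ∑ h, c h • (ϑ h : X) := by
      intro c
      rw [show ((∑ h, c h • ϑ h : V) : X) = V.subtype (∑ h, c h • ϑ h) from rfl, map_sum]
      exact Finset.sum_congr rfl fun h _ => by simp
    have hvne : ∀ c : Fin N → ℝ, c ≠ 0 → (∑ h, c h • (ϑ h : X)) ≠ 0 := by
      intro c hc hv
      apply hc
      have h2 : (∑ h, c h • ϑ h : V) = 0 := Subtype.ext (by rw [hcoe, hv]; rfl)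
      exact funext (Fintype.linearIndependent_iff.mp ϑ.linearIndependent c h2)
    have hsummq : ∀ (S : ℕ → X →L[ℝ] ℝ), (∀ i, ‖S i‖ ≤ 1) → ∀ y : X,
        Summable (fun i => w i * (S i y) ^ 2) := by
      intro S hS y
      have := summable_w_mul w hw0 hw_sum S S hS hS y y
      simpa [pow_two, mul_assoc] using this
    have hG0pos : (G 0).PosDef := by
      refine Matrix.PosDef.of_dotProduct_mulVec_pos hermG (fun ⦃c⦄ hc => ?_)
      rw [hstar, quad_helper w hw0 hw_sum T hT (fun h => (ϑ h : X)) (G 0) (hG 0) c]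
      set v := ∑ h, c h • (ϑ h : X) with hv
      by_cases hTv : ∀ i, T i v = 0
      · exact absurd (hdet v (hvmem c) hTv) (hvne c hc)
      · push_neg at hTv
        obtain ⟨i, hi⟩ := hTv
        exact Summable.tsum_pos (hsummq T hT v) (fun j => mul_nonneg (hw0 j) (sq_nonneg _)) i
          (mul_pos (hw_pos i) ((sq_nonneg _).lt_of_ne (Ne.symm (pow_ne_zero 2 hi))))
    -- minimum of the limit quadratic form on the unit sphere
    have hcont : Continuous (fun c : Fin N → ℝ => dotProduct c ((G 0).mulVec c)) := by
      simp only [dotProduct, Matrix.mulVec]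
      exact continuous_finset_sum _ fun h _ => (continuous_apply h).mul
        (continuous_finset_sum _ fun k _ => (continuous_const.mul (continuous_apply k)))
    obtain ⟨c₀, hc₀S, hc₀min⟩ := (isCompact_sphere (0 : Fin N → ℝ) 1).exists_isMinOn
      (NormedSpace.sphere_nonempty.mpr zero_le_one) hcont.continuousOn
    have hc₀norm : ‖c₀‖ = 1 := by simpa using hc₀S
    have hc₀ne : c₀ ≠ 0 := by
      intro h0; rw [h0] at hc₀norm; simp at hc₀norm
    set m := dotProduct c₀ ((G 0).mulVec c₀) with hm
    have hmpos : 0 < m := by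
      have := hG0pos.dotProduct_mulVec_pos hc₀ne
      rwa [hstar] at this
    have hq0min : ∀ d : Fin N → ℝ, ‖d‖ = 1 → m ≤ dotProduct d ((G 0).mulVec d) :=
      fun d hd => hc₀min (by simpa [mem_sphere_zero_iff_norm] using hd)
    -- constants
    set B := ∑ h, ‖(ϑ h : X)‖ with hB
    have hBpos : 0 < B :=
      Finset.sum_pos (fun h _ => norm_pos_iff.mpr (hϑne h)) Finset.univ_nonempty
    have hBle : ∀ h : Fin N, ‖(ϑ h : X)‖ ≤ B := fun h =>
      Finset.single_le_sum (f := fun h : Fin N => ‖(ϑ h : X)‖)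
        (fun h _ => norm_nonneg _) (Finset.mem_univ h)
    set K := 2 * B ^ 2 with hK
    have hKpos : 0 < K := by positivity
    set P := (N : ℝ) ^ 2 * K with hP
    have hPpos : 0 < P := mul_pos (pow_pos (by exact_mod_cast hN) 2) hKpos
    set δ := m / (P + 1) with hδ
    have hδpos : 0 < δ := div_pos hmpos (by linarith)
    have hPδ : P * δ < m := by
      rw [hδ, mul_comm, div_mul_eq_mul_div, div_lt_iff₀ (by linarith : (0:ℝ) < P + 1)]
      nlinarith
    have hentry : ∀ ε h k, |Gε ε h k - G 0 h k| ≤ K * D ε := by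
      intro ε h k
      have h1 := hbound ε h k
      have e : G ε h k = G 0 h k := by rw [hG, hG]
      rw [e] at h1
      refine h1.trans (mul_le_mul_of_nonneg_right ?_ (hDnn ε))
      have hh := hBle h
      have hk := hBle k
      nlinarith [norm_nonneg (ϑ h : X), norm_nonneg (ϑ k : X)]
    have hev : {ε : ℝ | D ε < δ} ∈ 𝓝[>] (0:ℝ) := hconv (Iio_mem_nhds hδpos)
    obtain ⟨ε₀, hε₀mem, hsub⟩ := mem_nhdsGT_iff_exists_Ioo_subset.mp hev
    refine ⟨ε₀, hε₀mem, ?_⟩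
    intro ε hε1 hε2
    have hDε : D ε < δ := hsub ⟨hε1, hε2⟩
    have hqdiff : ∀ d : Fin N → ℝ, ‖d‖ = 1 →
        |dotProduct d ((Gε ε).mulVec d) - dotProduct d ((G 0).mulVec d)|
          ≤ P * D ε := by
      intro d hd
      have hdb : ∀ h, |d h| ≤ 1 := fun h => by
        have := norm_le_pi_norm d h
        rw [hd] at this
        simpa [Real.norm_eq_abs] using this
      have e1 : dotProduct d ((Gε ε).mulVec d) - dotProduct d ((G 0).mulVec d)
          = ∑ h, ∑ k, d h * ((Gε ε h k - G 0 h k) * d k) := by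
        simp only [dotProduct, Matrix.mulVec, Finset.mul_sum]
        rw [← Finset.sum_sub_distrib]
        refine Finset.sum_congr rfl fun h _ => ?_
        rw [← Finset.sum_sub_distrib]
        refine Finset.sum_congr rfl fun k _ => by ring
      rw [e1]
      calc |∑ h, ∑ k, d h * ((Gε ε h k - G 0 h k) * d k)|
          ≤ ∑ h, |∑ k, d h * ((Gε ε h k - G 0 h k) * d k)| :=
            Finset.abs_sum_le_sum_abs _ _
        _ ≤ ∑ h : Fin N, ∑ k : Fin N, |d h * ((Gε ε h k - G 0 h k) * d k)| :=
            Finset.sum_le_sum fun h _ => Finset.abs_sum_le_sum_abs _ _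
        _ ≤ ∑ _h : Fin N, ∑ _k : Fin N, K * D ε := by
            refine Finset.sum_le_sum fun h _ => Finset.sum_le_sum fun k _ => ?_
            rw [abs_mul, abs_mul]
            calc |d h| * (|Gε ε h k - G 0 h k| * |d k|)
                ≤ 1 * ((K * D ε) * 1) := by
                  refine mul_le_mul (hdb h) (mul_le_mul (hentry ε h k) (hdb k)
                    (abs_nonneg _) (mul_nonneg hKpos.le (hDnn ε)))
                    (mul_nonneg (abs_nonneg _) (abs_nonneg _)) zero_le_one
              _ = K * D ε := by ring
        _ = P * D ε := by
            simp only [Finset.sum_const, Finset.card_univ, Fintype.card_fin, nsmul_eq_mul]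
            rw [hP]
            ring
    have hqεpos : ∀ d : Fin N → ℝ, ‖d‖ = 1 →
        0 < dotProduct d ((Gε ε).mulVec d) := by
      intro d hd
      have h1 := abs_le.mp (hqdiff d hd)
      have h2 := hq0min d hd
      have h3 : P * D ε ≤ P * δ := mul_le_mul_of_nonneg_left hDε.le hPpos.le
      linarith [h1.1, hPδ]
    have hPD : (Gε ε).PosDef := by
      refine Matrix.PosDef.of_dotProduct_mulVec_pos (hermGε ε) (fun ⦃c⦄ hc => ?_)
      rw [hstar]
      have hnc : (0:ℝ) < ‖c‖ := norm_pos_iff.mpr hc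
      set c' := ‖c‖⁻¹ • c with hc'
      have hc'1 : ‖c'‖ = 1 := by
        rw [hc', norm_smul, norm_inv, norm_norm, inv_mul_cancel₀ hnc.ne']
      have hcc : c = ‖c‖ • c' := by
        rw [hc', smul_smul, mul_inv_cancel₀ hnc.ne', one_smul]
      have hscale : dotProduct c ((Gε ε).mulVec c)
          = ‖c‖ ^ 2 * dotProduct c' ((Gε ε).mulVec c') := by
        conv_lhs => rw [hcc]
        rw [Matrix.mulVec_smul, smul_dotProduct, dotProduct_smul,
          smul_eq_mul, smul_eq_mul]
        ring
      rw [hscale]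
      exact mul_pos (pow_pos hnc 2) (hqεpos c' hc'1)
    refine ⟨hPD, ?_⟩
    intro v hv hTv
    by_contra hvne0
    set c : Fin N → ℝ := fun h => ϑ.repr ⟨v, hv⟩ h with hc
    have hsumv : (∑ h, c h • (ϑ h : X)) = v := by
      have h1 := ϑ.sum_repr ⟨v, hv⟩
      calc ∑ h, c h • (ϑ h : X) = ((∑ h, c h • ϑ h : V) : X) := (hcoe c).symm
        _ = v := by rw [show (∑ h, c h • ϑ h : V) = ∑ h, ϑ.repr ⟨v, hv⟩ h • ϑ h from rfl, h1]
    have hcne : c ≠ 0 := by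
      intro h0
      apply hvne0
      have h1 : ϑ.repr ⟨v, hv⟩ = 0 := Finsupp.ext fun h => congrFun h0 h
      have h2 : (⟨v, hv⟩ : V) = 0 := by
        apply ϑ.repr.injective
        rw [h1, map_zero]
      simpa using congrArg Subtype.val h2
    have hq : dotProduct c ((Gε ε).mulVec c) = 0 := by
      rw [quad_helper w hw0 hw_sum (Tε ε) (hTε ε) (fun h => (ϑ h : X)) (Gε ε) (hGε ε) c]
      rw [hsumv]
      simp [hTv]
    have := hPD.dotProduct_mulVec_pos hcne
    rw [hstar, hq] at this
    exact lt_irrefl 0 this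
end
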